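/- Let π₁₂, π₁₃, π₂₃ ≥ 0 with π₁₂ + π₁₃ + π₂₃ = 1 and v₁, v₂, v₃ ∈ [0,1) with v₁ + v₂ + v₃ = 2. Suppose for each i ∈ {1,2,3}: v_i − π_{jk} ≥ 0 where {j,k} = {1,2,3}∖{i}, and v_i < 1. Consider the bipartite graph on supplies b({i,j}) = π_{ij}/2 and demands b(k) = (v_k − π_{ij'})/2 (where {i,j'} is the complement of {k}), with edges ({i,j}, k) for k ∈ {i,j}. Then total supply equals total demand equals 1/2, and Hall's condition holds for all subsets of the supply side; hence a feasible nonnegative transshipment exists. -/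

import Mathlib

private lemma fin3_mk0 (h : 0 < 3) : (⟨0, h⟩ : Fin 3) = 0 := rfl
private lemma fin3_mk1 (h : 1 < 3) : (⟨1, h⟩ : Fin 3) = 1 := rfl
private lemma fin3_mk2 (h : 2 < 3) : (⟨2, h⟩ : Fin 3) = 2 := rfl

/-- residual transshipment feasibility, Case 2.2.2: Index the
size-2 sets `{i,j} ⊆ {1,2,3}` by their missing party `m`, with supply
`p m / 2` where `p m := π_{ij}` (`{i,j} = {1,2,3} ∖ {m}`), `p ≥ 0`, `∑ p = 1`.
Party `k` has demand `(v k − p k)/2`, where `v k ∈ [0,1)`, `∑ v = 2`, and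
`v k ≥ p k`. The set missing `m` is adjacent exactly to the parties `k ≠ m`.
Then total supply = total demand = 1/2, Hall's condition holds for every subset
of the supply side, and a feasible nonnegative transshipment exists. -/
theorem stmt13 (p v : Fin 3 → ℝ)
    (hp0 : ∀ m, 0 ≤ p m) (hpsum : ∑ m, p m = 1)
    (hv : ∀ k, 0 ≤ v k ∧ v k < 1) (hvsum : ∑ k, v k = 2)
    (hlow : ∀ k, p k ≤ v k) :
    (∑ m, p m / 2 = 1 / 2) ∧
    (∑ k, (v k - p k) / 2 = 1 / 2) ∧
    (∀ S : Finset (Fin 3),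
      ∑ m ∈ S, p m / 2
        ≤ ∑ k ∈ Finset.univ.filter (fun k => ∃ m ∈ S, k ≠ m),
            (v k - p k) / 2) ∧
    ∃ f : Fin 3 → Fin 3 → ℝ,
      (∀ m k, 0 ≤ f m k) ∧
      (∀ m, f m m = 0) ∧
      (∀ m, ∑ k, f m k = p m / 2) ∧
      (∀ k, ∑ m, f m k = (v k - p k) / 2) := by
  simp only [Fin.sum_univ_three] at hpsum hvsum
  have hp00 := hp0 0; have hp01 := hp0 1; have hp02 := hp0 2
  obtain ⟨hv00, hv01⟩ := hv 0
  obtain ⟨hv10, hv11⟩ := hv 1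
  obtain ⟨hv20, hv21⟩ := hv 2
  have hl0 := hlow 0; have hl1 := hlow 1; have hl2 := hlow 2
  set S0 := p 0 / 2 with hS0
  set S1 := p 1 / 2 with hS1
  set S2 := p 2 / 2 with hS2
  set D0 := (v 0 - p 0) / 2 with hD0
  set D1 := (v 1 - p 1) / 2 with hD1
  set D2 := (v 2 - p 2) / 2 with hD2
  refine ⟨by simp [Fin.sum_univ_three]; linarith, by simp [Fin.sum_univ_three]; linarith, ?_, ?_⟩
  · intro S
    fin_cases S <;>
      · simp (config := { decide := true }) only [Finset.sum_filter,
          Fin.sum_univ_three, Finset.mem_insert, Finset.mem_singleton,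
          Finset.notMem_empty, if_true, if_false, Finset.sum_mk,
          Multiset.map_coe, Multiset.sum_coe, List.map_cons, List.map_nil,
          List.sum_cons, List.sum_nil, fin3_mk0, fin3_mk1, fin3_mk2]
        try linarith
  · set c := max (max 0 (D0 - S1)) (S2 - D1) with hc
    have hc0 : 0 ≤ c := le_trans (le_max_left _ _) (le_max_left _ _)
    have hc1 : D0 - S1 ≤ c := le_trans (le_max_right _ _) (le_max_left _ _)
    have hc2 : S2 - D1 ≤ c := le_max_right _ _
    have hcu1 : c ≤ S2 := by
      apply max_le (max_le (by linarith) (by linarith)) (by linarith)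
    have hcu2 : c ≤ D0 := by
      apply max_le (max_le (by linarith) (by linarith)) (by linarith)
    have hcu3 : c ≤ S2 - D1 + S0 := by
      apply max_le (max_le (by linarith) (by linarith)) (by linarith)
    set b := D0 - c with hb
    set a := D1 - S2 + c with ha
    refine ⟨![![0, a, S0 - a], ![b, 0, S1 - b], ![c, S2 - c, 0]], ?_, ?_, ?_, ?_⟩
    · intro m k
      fin_cases m <;> fin_cases k <;> simp <;> linarith
    · intro m; fin_cases m <;> simp
    · intro m
      fin_cases m <;> simp [Fin.sum_univ_three] <;> ring
    · intro k
      fin_cases k <;> simp [Fin.sum_univ_three] <;> linarith
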